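/- Let G be a finite simple bipartite graph with at least one edge, parts V_1 and V_2, and maximum degree Δ. Then (2/√Δ) · Σ_{v ∈ V_1} √(deg(v)) ≤ E(G) ≤ 2 · Σ_{v ∈ V_1} √(deg(v)). -/

import Mathlib

open Matrix Finset

/-- The energy of the vertex `i` of a finite simple graph `G`:
the `(i,i)` entry of `|A| = (A Aᴴ)^{1/2}`, where `A` is the adjacency matrix. -/
noncomputable def vertexEnergy {n : ℕ} (G : SimpleGraph (Fin n)) [DecidableRel G.Adj]
    (i : Fin n) : ℝ :=
  (let hA := Matrix.posSemidef_self_mul_conjTranspose (G.adjMatrix ℝ)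
   ((hA.1.eigenvectorUnitary : Matrix (Fin n) (Fin n) ℝ) *
      diagonal ((RCLike.ofReal : ℝ → ℝ) ∘ Real.sqrt ∘ hA.1.eigenvalues) *
      (star hA.1.eigenvectorUnitary : Matrix (Fin n) (Fin n) ℝ))) i i

/-- The energy of a finite simple graph: the sum of the energies of its vertices. -/
noncomputable def graphEnergy {n : ℕ} (G : SimpleGraph (Fin n)) [DecidableRel G.Adj] : ℝ :=
  ∑ i, vertexEnergy G i

/-- The square root of a positive semidefinite real matrix (as in the old Mathlib). -/
noncomputable def Matrix.PosSemidef.sqrt {N : ℕ} {A : Matrix (Fin N) (Fin N) ℝ}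
    (hA : A.PosSemidef) : Matrix (Fin N) (Fin N) ℝ :=
  (hA.1.eigenvectorUnitary : Matrix (Fin N) (Fin N) ℝ) *
    diagonal ((RCLike.ofReal : ℝ → ℝ) ∘ Real.sqrt ∘ hA.1.eigenvalues) *
    (star hA.1.eigenvectorUnitary : Matrix (Fin N) (Fin N) ℝ)

lemma Matrix.PosSemidef.posSemidef_sqrt {N : ℕ} {A : Matrix (Fin N) (Fin N) ℝ}
    (hA : A.PosSemidef) : hA.sqrt.PosSemidef := by
  have h := PosSemidef.mul_mul_conjTranspose_same
    (A := diagonal ((RCLike.ofReal : ℝ → ℝ) ∘ Real.sqrt ∘ hA.1.eigenvalues))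
    (posSemidef_diagonal_iff.mpr fun i => Real.sqrt_nonneg _)
    (hA.1.eigenvectorUnitary : Matrix (Fin N) (Fin N) ℝ)
  have hs : (star hA.1.eigenvectorUnitary : Matrix (Fin N) (Fin N) ℝ)
      = (hA.1.eigenvectorUnitary : Matrix (Fin N) (Fin N) ℝ)ᴴ := rfl
  rw [Matrix.PosSemidef.sqrt, hs]
  exact h

lemma Matrix.PosSemidef.sqrt_mul_self {N : ℕ} {A : Matrix (Fin N) (Fin N) ℝ}
    (hA : A.PosSemidef) : hA.sqrt * hA.sqrt = A := by
  let C : Matrix (Fin N) (Fin N) ℝ := hA.1.eigenvectorUnitary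
  let E := diagonal ((RCLike.ofReal : ℝ → ℝ) ∘ Real.sqrt ∘ hA.1.eigenvalues)
  have hCC : star C * C = 1 := (Matrix.mem_unitaryGroup_iff').mp hA.1.eigenvectorUnitary.2
  suffices C * (E * (star C * C) * E) * star C = A by
    change (C * E * star C) * (C * E * star C) = A
    simpa only [← mul_assoc] using this
  have : E * E = diagonal ((RCLike.ofReal : ℝ → ℝ) ∘ hA.1.eigenvalues) := by
    rw [diagonal_mul_diagonal]
    congr 1
    funext v
    simp [Real.mul_self_sqrt (hA.eigenvalues_nonneg v)]
  rw [hCC, mul_one, this]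
  have h := hA.1.spectral_theorem
  rw [Unitary.conjStarAlgAut_apply] at h
  exact h.symm

namespace VertexEnergyAux

open Polynomial

lemma psd_diag_nonneg {N : ℕ} {M : Matrix (Fin N) (Fin N) ℝ} (h : M.PosSemidef) (i : Fin N) :
    0 ≤ M i i := by
  have := h.diag_nonneg (i := i)
  simpa using this

lemma conj_pow' {N : ℕ} (U D V : Matrix (Fin N) (Fin N) ℝ) (hUV : U * V = 1) (hVU : V * U = 1)
    (k : ℕ) : (U * D * V) ^ k = U * D ^ k * V := by
  induction k with
  | zero => simp [hUV]
  | succ k ih =>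
      rw [pow_succ, ih, pow_succ]
      have : U * D ^ k * V * (U * D * V) = U * D ^ k * (V * U) * D * V := by
        noncomm_ring
      rw [this, hVU]
      noncomm_ring

lemma aeval_conj {N : ℕ} (U D V : Matrix (Fin N) (Fin N) ℝ) (hUV : U * V = 1) (hVU : V * U = 1)
    (p : Polynomial ℝ) : aeval (U * D * V) p = U * aeval D p * V := by
  rw [aeval_eq_sum_range, aeval_eq_sum_range, Finset.mul_sum, Finset.sum_mul]
  exact Finset.sum_congr rfl fun i _ => by
    rw [conj_pow' U D V hUV hVU, mul_smul_comm, smul_mul_assoc]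

lemma aeval_diag {N : ℕ} (d : Fin N → ℝ) (p : Polynomial ℝ) :
    aeval (Matrix.diagonal d) p = Matrix.diagonal (fun i => p.eval (d i)) := by
  rw [aeval_eq_sum_range]
  ext i j
  rcases eq_or_ne i j with rfl | h
  · simp [Matrix.sum_apply, Matrix.diagonal_pow, eval_eq_sum_range, Pi.pow_apply]
  · simp [Matrix.sum_apply, Matrix.diagonal_pow, Matrix.diagonal_apply_ne _ h, h]

lemma exists_poly_sqrt {N : ℕ} {H : Matrix (Fin N) (Fin N) ℝ} (hH : H.PosSemidef) :
    ∃ p : Polynomial ℝ, p.eval 0 = 0 ∧ hH.sqrt = aeval H p := by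
  classical
  set s : Finset ℝ := insert (0:ℝ) (Finset.image hH.1.eigenvalues Finset.univ) with hs
  set p : Polynomial ℝ := Lagrange.interpolate s id Real.sqrt with hp
  have heval : ∀ x ∈ s, p.eval x = Real.sqrt x := by
    intro x hx
    have := Lagrange.eval_interpolate_at_node (s := s) (v := id) Real.sqrt
      (Set.injOn_id _) hx
    exact this
  refine ⟨p, by simpa [Real.sqrt_zero] using heval 0 (by simp [hs]), ?_⟩
  have hspec := hH.1.spectral_theorem
  set U : Matrix (Fin N) (Fin N) ℝ := (hH.1.eigenvectorUnitary : Matrix (Fin N) (Fin N) ℝ) with hU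
  have hUV : U * star U = 1 :=
    (Matrix.mem_unitaryGroup_iff).mp hH.1.eigenvectorUnitary.2
  have hVU : star U * U = 1 :=
    (Matrix.mem_unitaryGroup_iff').mp hH.1.eigenvectorUnitary.2
  have key : aeval H p
      = U * Matrix.diagonal (fun i => p.eval (hH.1.eigenvalues i)) * star U := by
    conv_lhs => rw [hspec, Unitary.conjStarAlgAut_apply]
    rw [aeval_conj _ _ _ hUV hVU, aeval_diag]
    congr 1
  have hfun : (fun i => p.eval (hH.1.eigenvalues i))
      = ((RCLike.ofReal : ℝ → ℝ) ∘ Real.sqrt ∘ hH.1.eigenvalues) := funext fun i => by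
    simp [heval _ (Finset.mem_insert_of_mem (Finset.mem_image_of_mem _ (Finset.mem_univ i)))]
  rw [key, hfun]
  rfl

lemma diag_pow_sq_le {N : ℕ} {M : Matrix (Fin N) (Fin N) ℝ} (hM : M.IsHermitian)
    (a b : ℕ) (i : Fin N) :
    ((M ^ (a + b)) i i) ^ 2 ≤ ((M ^ (a + a)) i i) * ((M ^ (b + b)) i i) := by
  have hsym : ∀ (c : ℕ) (k l : Fin N), (M ^ c) k l = (M ^ c) l k := by
    intro c k l
    conv_lhs => rw [← hM.pow c]
    simp [Matrix.conjTranspose_apply]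
  have h1 : (M ^ (a + b)) i i = ∑ k, (M ^ a) i k * (M ^ b) i k := by
    rw [pow_add, Matrix.mul_apply]
    exact Finset.sum_congr rfl fun k _ => by rw [hsym b i k]
  have h2 : (M ^ (a + a)) i i = ∑ k, (M ^ a) i k ^ 2 := by
    rw [pow_add, Matrix.mul_apply]
    exact Finset.sum_congr rfl fun k _ => by rw [hsym a i k]; ring
  have h3 : (M ^ (b + b)) i i = ∑ k, (M ^ b) i k ^ 2 := by
    rw [pow_add, Matrix.mul_apply]
    exact Finset.sum_congr rfl fun k _ => by rw [hsym b i k]; ring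
  rw [h1, h2, h3]
  exact Finset.sum_mul_sq_le_sq_mul_sq _ _ _

lemma adj_row_sum {n : ℕ} (G : SimpleGraph (Fin n)) [DecidableRel G.Adj] (i : Fin n) :
    ∑ j, G.adjMatrix ℝ i j = (G.degree i : ℝ) := by
  simp [SimpleGraph.adjMatrix_apply, Finset.sum_boole, SimpleGraph.degree,
    SimpleGraph.neighborFinset_eq_filter]

lemma adj_pow4_le {n : ℕ} (G : SimpleGraph (Fin n)) [DecidableRel G.Adj] (i : Fin n) :
    (G.adjMatrix ℝ * (G.adjMatrix ℝ * G.adjMatrix ℝ) * G.adjMatrix ℝ) i i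
      ≤ (G.degree i : ℝ) ^ 2 * (G.maxDegree : ℝ) := by
  set A := G.adjMatrix ℝ with hA
  have hnn : ∀ k l, 0 ≤ A k l := fun k l => by
    rw [hA]; simp [SimpleGraph.adjMatrix_apply]; positivity
  have hmid : ∀ a c : Fin n, (A * A) a c ≤ (G.maxDegree : ℝ) := by
    intro a c
    rw [Matrix.mul_apply]
    calc ∑ b, A a b * A b c ≤ ∑ b, A a b * 1 := by
          refine Finset.sum_le_sum fun b _ => mul_le_mul_of_nonneg_left ?_ (hnn a b)
          rw [hA]; simp [SimpleGraph.adjMatrix_apply]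
          split <;> norm_num
      _ = (G.degree a : ℝ) := by
          rw [← adj_row_sum G a]
          exact Finset.sum_congr rfl fun b _ => by rw [mul_one]
      _ ≤ (G.maxDegree : ℝ) := by exact_mod_cast G.degree_le_maxDegree a
  have expand : (A * (A * A) * A) i i = ∑ c, (∑ a, A i a * (A * A) a c) * A c i := by
    rw [Matrix.mul_apply]
    exact Finset.sum_congr rfl fun c _ => by rw [Matrix.mul_apply]
  rw [expand]
  have step : ∀ c, (∑ a, A i a * (A * A) a c) * A c i
      ≤ ((G.degree i : ℝ) * (G.maxDegree : ℝ)) * A c i := by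
    intro c
    refine mul_le_mul_of_nonneg_right ?_ (hnn c i)
    calc ∑ a, A i a * (A * A) a c ≤ ∑ a, A i a * (G.maxDegree : ℝ) :=
          Finset.sum_le_sum fun a _ => mul_le_mul_of_nonneg_left (hmid a c) (hnn i a)
      _ = (G.degree i : ℝ) * (G.maxDegree : ℝ) := by
          rw [← Finset.sum_mul, adj_row_sum]
  calc ∑ c, (∑ a, A i a * (A * A) a c) * A c i
      ≤ ∑ c, ((G.degree i : ℝ) * (G.maxDegree : ℝ)) * A c i :=
        Finset.sum_le_sum fun c _ => step c
    _ = (G.degree i : ℝ) ^ 2 * (G.maxDegree : ℝ) := by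
        rw [← Finset.mul_sum]
        have : ∑ c, A c i = (G.degree i : ℝ) := by
          rw [← adj_row_sum G i]
          exact Finset.sum_congr rfl fun c _ => by
            rw [hA]; simp [SimpleGraph.adjMatrix_apply, SimpleGraph.adj_comm]
        rw [this]; ring

lemma trace_sign_pow {N : ℕ} (A S : Matrix (Fin N) (Fin N) ℝ) (hSA : S * A = -(A * S)) :
    ∀ k : ℕ, Matrix.trace (S * A ^ (k + 1)) = 0 := by
  intro k
  have h : Matrix.trace (S * A ^ (k + 1)) = -Matrix.trace (S * A ^ (k + 1)) := by
    calc Matrix.trace (S * A ^ (k + 1)) = Matrix.trace (S * (A * A ^ k)) := by rw [pow_succ']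
      _ = Matrix.trace ((S * A) * A ^ k) := by rw [mul_assoc]
      _ = Matrix.trace (-(A * S) * A ^ k) := by rw [hSA]
      _ = -Matrix.trace (A * (S * A ^ k)) := by rw [neg_mul, Matrix.trace_neg, mul_assoc]
      _ = -Matrix.trace ((S * A ^ k) * A) := by rw [Matrix.trace_mul_comm]
      _ = -Matrix.trace (S * A ^ (k + 1)) := by rw [mul_assoc, ← pow_succ]
  linarith

lemma conjTranspose_adj {n : ℕ} (G : SimpleGraph (Fin n)) [DecidableRel G.Adj] :
    (G.adjMatrix ℝ)ᴴ = G.adjMatrix ℝ := by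
  ext i j
  simp [Matrix.conjTranspose_apply, SimpleGraph.adjMatrix_apply, SimpleGraph.adj_comm]

/-- Half-trace: in a bipartite graph the vertex energies of the two parts have equal sums. -/
lemma half_trace {n : ℕ} (G : SimpleGraph (Fin n)) [DecidableRel G.Adj]
    (V₁ V₂ : Finset (Fin n)) (hdisj : Disjoint V₁ V₂) (hcover : V₁ ∪ V₂ = Finset.univ)
    (hbip : ∀ u v : Fin n, G.Adj u v → (u ∈ V₁ ∧ v ∈ V₂) ∨ (u ∈ V₂ ∧ v ∈ V₁)) :
    ∑ v ∈ V₁, vertexEnergy G v = ∑ v ∈ V₂, vertexEnergy G v := by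
  classical
  set A := G.adjMatrix ℝ with hA
  have hH := Matrix.posSemidef_self_mul_conjTranspose A
  set B := hH.sqrt with hBdef
  have hvE : ∀ v, vertexEnergy G v = B v v := fun v => rfl
  obtain ⟨p, hp0, hpB⟩ := exists_poly_sqrt hH
  set sgn : Fin n → ℝ := fun v => if v ∈ V₁ then 1 else -1 with hsgn
  set S : Matrix (Fin n) (Fin n) ℝ := Matrix.diagonal sgn with hS
  have hSA : S * A = -(A * S) := by
    ext i j
    rw [hS, Matrix.neg_apply, Matrix.diagonal_mul, Matrix.mul_diagonal]
    by_cases hadj : G.Adj i j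
    · have h1 : A i j = 1 := by rw [hA]; simp [SimpleGraph.adjMatrix_apply, hadj]
      rcases hbip i j hadj with ⟨hi, hj⟩ | ⟨hi, hj⟩
      · have hj' : j ∉ V₁ := Finset.disjoint_right.mp hdisj hj
        simp [hsgn, hi, hj', h1]
      · have hi' : i ∉ V₁ := Finset.disjoint_right.mp hdisj hi
        simp [hsgn, hi', hj, h1]
    · have h0 : A i j = 0 := by rw [hA]; simp [SimpleGraph.adjMatrix_apply, hadj]
      simp [h0]
  have hAAH : A * Aᴴ = A ^ 2 := by rw [conjTranspose_adj, sq]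
  have htrB : Matrix.trace (S * B) = 0 := by
    rw [hBdef, hpB, hAAH, aeval_eq_sum_range, Finset.mul_sum, Matrix.trace_sum]
    refine Finset.sum_eq_zero fun k _ => ?_
    rw [Matrix.mul_smul, Matrix.trace_smul]
    rcases Nat.eq_zero_or_pos k with rfl | hk
    · rw [Polynomial.coeff_zero_eq_eval_zero, hp0]
      simp
    · obtain ⟨m, rfl⟩ := Nat.exists_eq_add_of_lt hk
      have hpow : (A ^ 2) ^ (0 + m + 1) = A ^ (2 * m + 1 + 1) := by
        rw [← pow_mul]
        congr 1
        ring
      rw [hpow, trace_sign_pow A S hSA]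
      simp
  have htr : ∑ v, sgn v * B v v = 0 := by
    rw [← htrB]
    rw [Matrix.trace]
    exact (Finset.sum_congr rfl fun v _ => by
      rw [Matrix.diag_apply, hS, Matrix.diagonal_mul]).symm
  have hsplit : ∑ v, sgn v * B v v
      = ∑ v ∈ V₁, B v v - ∑ v ∈ V₂, B v v := by
    rw [← hcover, Finset.sum_union hdisj]
    have e1 : ∑ v ∈ V₁, sgn v * B v v = ∑ v ∈ V₁, B v v :=
      Finset.sum_congr rfl fun v hv => by simp [hsgn, hv]
    have e2 : ∑ v ∈ V₂, sgn v * B v v = -∑ v ∈ V₂, B v v := by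
      rw [← Finset.sum_neg_distrib]
      exact Finset.sum_congr rfl fun v hv => by
        have : v ∉ V₁ := Finset.disjoint_right.mp hdisj hv
        simp [hsgn, this]
    rw [e1, e2]
    ring
  simp only [hvE]
  have := hsplit ▸ htr
  linarith

/-- Per-vertex bounds: `√(deg v)/√Δ ≤ E_G(v) ≤ √(deg v)`. -/
lemma vertexEnergy_bounds {n : ℕ} (G : SimpleGraph (Fin n)) [DecidableRel G.Adj] (i : Fin n) :
    Real.sqrt (G.degree i) / Real.sqrt (G.maxDegree) ≤ vertexEnergy G i ∧
      vertexEnergy G i ≤ Real.sqrt (G.degree i) := by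
  classical
  set A := G.adjMatrix ℝ with hA
  have hH := Matrix.posSemidef_self_mul_conjTranspose A
  set B := hH.sqrt with hBdef
  have hB : B.PosSemidef := hH.posSemidef_sqrt
  set C := hB.sqrt with hCdef
  have hC : C.PosSemidef := hB.posSemidef_sqrt
  have hCB : C ^ 2 = B := by rw [sq, hB.sqrt_mul_self]
  have hBA : B ^ 2 = A * A := by
    rw [sq, hH.sqrt_mul_self, conjTranspose_adj]
  have hvE : vertexEnergy G i = B i i := rfl
  set d : ℝ := (G.degree i : ℝ) with hd
  have hd0 : 0 ≤ d := by positivity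
  have hB2d : (B ^ 2) i i = d := by
    rw [hBA, hd, hA]
    exact G.adjMatrix_mul_self_apply_self i
  set b : ℝ := B i i with hb
  have hb0 : 0 ≤ b := psd_diag_nonneg hB i
  set e3 : ℝ := (B ^ 3) i i with he3def
  have he30 : 0 ≤ e3 := psd_diag_nonneg (hB.pow 3) i
  -- d^2 ≤ b * e3
  have ineq1 : d ^ 2 ≤ b * e3 := by
    have h := diag_pow_sq_le hC.1 1 3 i
    rw [show (1 + 3 : ℕ) = 2 * 2 by norm_num, show (1 + 1 : ℕ) = 2 * 1 by norm_num,
      show (3 + 3 : ℕ) = 2 * 3 by norm_num, pow_mul, pow_mul, pow_mul, hCB] at h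
    simpa [hB2d, pow_one] using h
  -- e3 ^ 2 ≤ d * (B^4) i i
  have ineq2 : e3 ^ 2 ≤ d * (B ^ 4) i i := by
    have h := diag_pow_sq_le hB.1 1 2 i
    rw [show (1 + 2 : ℕ) = 3 by norm_num, show (1 + 1 : ℕ) = 2 by norm_num,
      show (2 + 2 : ℕ) = 4 by norm_num, hB2d] at h
    exact h
  -- (B^4) i i ≤ d^2 * Δ
  set Δr : ℝ := (G.maxDegree : ℝ) with hΔ
  have hΔ0 : 0 ≤ Δr := by positivity
  have ineq3 : (B ^ 4) i i ≤ d ^ 2 * Δr := by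
    have h4 : B ^ 4 = A * (A * A) * A := by
      rw [show (4 : ℕ) = 2 * 2 by norm_num, pow_mul, hBA]
      noncomm_ring
    rw [h4]
    exact adj_pow4_le G i
  -- now pure real arithmetic
  set x : ℝ := Real.sqrt d with hx
  set y : ℝ := Real.sqrt Δr with hy
  have hx0 : 0 ≤ x := Real.sqrt_nonneg _
  have hy0 : 0 ≤ y := Real.sqrt_nonneg _
  have hx2 : x ^ 2 = d := Real.sq_sqrt hd0
  have hy2 : y ^ 2 = Δr := Real.sq_sqrt hΔ0
  constructor
  · -- lower bound : x / y ≤ b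
    have he3le : e3 ≤ x ^ 3 * y := by
      have h1 : e3 ^ 2 ≤ (x ^ 3 * y) ^ 2 := by
        calc e3 ^ 2 ≤ d * (B ^ 4) i i := ineq2
          _ ≤ d * (d ^ 2 * Δr) := by
              exact mul_le_mul_of_nonneg_left ineq3 hd0
          _ = (x ^ 3 * y) ^ 2 := by rw [← hx2, ← hy2]; ring
      nlinarith [mul_nonneg (mul_nonneg (mul_nonneg hx0 hx0) hx0) hy0]
    have key : x ^ 4 ≤ (b * y) * x ^ 3 := by
      calc x ^ 4 = d ^ 2 := by rw [← hx2]; ring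
        _ ≤ b * e3 := ineq1
        _ ≤ b * (x ^ 3 * y) := mul_le_mul_of_nonneg_left he3le hb0
        _ = (b * y) * x ^ 3 := by ring
    rcases eq_or_lt_of_le hy0 with hy0' | hy0'
    · rw [← hy0', div_zero]
      exact hb0
    rcases eq_or_lt_of_le hx0 with hx0' | hx0'
    · rw [← hx0', zero_div]
      exact hb0
    · rw [div_le_iff₀ hy0']
      have hx3 : (0:ℝ) < x ^ 3 := by positivity
      have : x * x ^ 3 ≤ (b * y) * x ^ 3 := by
        calc x * x ^ 3 = x ^ 4 := by ring
          _ ≤ (b * y) * x ^ 3 := key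
      exact le_of_mul_le_mul_right this hx3
  · -- upper bound : b ≤ x
    have h := diag_pow_sq_le hB.1 0 1 i
    rw [show (0 + 1 : ℕ) = 1 by norm_num, show (1 + 1 : ℕ) = 2 by norm_num, pow_zero, hB2d] at h
    have hb2 : b ^ 2 ≤ d := by
      simpa [hb, Matrix.one_apply_eq] using h
    have : b ^ 2 ≤ x ^ 2 := by rw [hx2]; exact hb2
    exact (pow_le_pow_iff_left₀ hb0 hx0 two_ne_zero).mp this

end VertexEnergyAux

theorem stmt_9 {n : ℕ} (G : SimpleGraph (Fin n)) [DecidableRel G.Adj]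
    (hedge : G.edgeSet.Nonempty)
    (V₁ V₂ : Finset (Fin n)) (hdisj : Disjoint V₁ V₂) (hcover : V₁ ∪ V₂ = Finset.univ)
    (hbip : ∀ u v : Fin n, G.Adj u v → (u ∈ V₁ ∧ v ∈ V₂) ∨ (u ∈ V₂ ∧ v ∈ V₁)) :
    (2 / Real.sqrt (G.maxDegree)) * ∑ v ∈ V₁, Real.sqrt (G.degree v) ≤ graphEnergy G ∧
    graphEnergy G ≤ 2 * ∑ v ∈ V₁, Real.sqrt (G.degree v) := by
  classical
  have hE2 : graphEnergy G = 2 * ∑ v ∈ V₁, vertexEnergy G v := by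
    rw [graphEnergy, ← hcover, Finset.sum_union hdisj,
      ← VertexEnergyAux.half_trace G V₁ V₂ hdisj hcover hbip]
    ring
  constructor
  · rw [hE2]
    have hperv : ∀ v ∈ V₁,
        Real.sqrt (G.degree v) / Real.sqrt (G.maxDegree) ≤ vertexEnergy G v :=
      fun v _ => (VertexEnergyAux.vertexEnergy_bounds G v).1
    have hsum : (∑ v ∈ V₁, Real.sqrt (G.degree v)) / Real.sqrt (G.maxDegree)
        ≤ ∑ v ∈ V₁, vertexEnergy G v := by
      rw [Finset.sum_div]
      exact Finset.sum_le_sum hperv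
    calc (2 / Real.sqrt (G.maxDegree)) * ∑ v ∈ V₁, Real.sqrt (G.degree v)
        = 2 * ((∑ v ∈ V₁, Real.sqrt (G.degree v)) / Real.sqrt (G.maxDegree)) := by ring
      _ ≤ 2 * ∑ v ∈ V₁, vertexEnergy G v := by linarith
  · rw [hE2]
    have hperv : ∀ v ∈ V₁, vertexEnergy G v ≤ Real.sqrt (G.degree v) :=
      fun v _ => (VertexEnergyAux.vertexEnergy_bounds G v).2
    have := Finset.sum_le_sum hperv
    linarith
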